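/- Let f ∈ Γ₀(ℝ^n) be sparsity promoting and α > 0. Define f_α = f − env_{αf}, where env_{αf}(x) = inf_u { f(u) + (1/(2α))‖u−x‖² }. Then f_α is nonnegative, f_α(0) = 0 is its global minimum, and ∂f_α(0) = ∂f(0); in particular f_α is sparsity promoting. -/

import Mathlib

open Set
open scoped RealInnerProductSpace Pointwise

noncomputable section

abbrev E (n : ℕ) := EuclideanSpace ℝ (Fin n)

/-- Convex subdifferential. -/
def subdiff {n : ℕ} (f : E n → ℝ) (x : E n) : Set (E n) :=
  {d | ∀ y, f x + ⟪d, y - x⟫ ≤ f y}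

/-- Fréchet subdifferential. -/
def fsubdiff {n : ℕ} (f : E n → ℝ) (x : E n) : Set (E n) :=
  {d | ∀ ε > (0:ℝ), ∃ δ > (0:ℝ), ∀ u, ‖u - x‖ < δ →
    f x + ⟪d, u - x⟫ - ε * ‖u - x‖ ≤ f u}

/-- Sparsity promoting: value 0 at the origin is the global minimum and the
subdifferential at 0 contains a nonzero element. -/
def SparsityPromoting {n : ℕ} (f : E n → ℝ) : Prop :=
  f 0 = 0 ∧ (∀ x, f 0 ≤ f x) ∧ ∃ d ∈ subdiff f 0, d ≠ 0

/-- Moreau envelope with parameter `α`. -/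
def env {n : ℕ} (α : ℝ) (f : E n → ℝ) (x : E n) : ℝ :=
  sInf (Set.range fun u => f u + ‖u - x‖ ^ 2 / (2 * α))

/-- Proximity operator (as a set of minimizers). -/
def proxSet {n : ℕ} (α : ℝ) (f : E n → ℝ) (x : E n) : Set (E n) :=
  {p | ∀ u, f p + ‖p - x‖ ^ 2 / (2 * α) ≤ f u + ‖u - x‖ ^ 2 / (2 * α)}

theorem stmt3 {n : ℕ} (f : E n → ℝ) (hconv : ConvexOn ℝ Set.univ f)
    (hlsc : LowerSemicontinuous f) (hsp : SparsityPromoting f)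
    (α : ℝ) (hα : 0 < α) :
    (∀ x, 0 ≤ f x - env α f x) ∧
    (f 0 - env α f 0 = 0) ∧
    (∀ x, f 0 - env α f 0 ≤ f x - env α f x) ∧
    fsubdiff (fun x => f x - env α f x) 0 = subdiff f 0 ∧
    (∃ d ∈ fsubdiff (fun x => f x - env α f x) 0, d ≠ 0) := by
  
  obtain ⟨hf0, hfmin, d0, hd0, hd0ne⟩ := hsp
  have hfnn : ∀ x, 0 ≤ f x := fun x => hf0 ▸ hfmin x
  have hne : ∀ x : E n, (Set.range fun u => f u + ‖u - x‖ ^ 2 / (2 * α)).Nonempty :=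
    fun x => Set.range_nonempty _
  have hbdd : ∀ x : E n, BddBelow (Set.range fun u => f u + ‖u - x‖ ^ 2 / (2 * α)) := by
    intro x
    refine ⟨0, ?_⟩
    rintro _ ⟨u, rfl⟩
    exact add_nonneg (hfnn u) (by positivity)
  have henv_nonneg : ∀ x, 0 ≤ env α f x := by
    intro x
    refine le_csInf (hne x) ?_
    rintro _ ⟨u, rfl⟩
    exact add_nonneg (hfnn u) (by positivity)
  have henv_le : ∀ x, env α f x ≤ f x := by
    intro x
    have h := csInf_le (hbdd x) ⟨x, rfl⟩
    simpa [env] using h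
  have henv0 : env α f 0 = 0 :=
    le_antisymm (by simpa [hf0] using henv_le 0) (henv_nonneg 0)
  have hkey : ∀ x : E n, env α f x ≤ ‖x‖ ^ 2 / (2 * α) := by
    intro x
    have h := csInf_le (hbdd x) ⟨0, rfl⟩
    simpa [hf0, env] using h
  have part1 : ∀ x, 0 ≤ f x - env α f x := fun x => sub_nonneg.2 (henv_le x)
  have part2 : f 0 - env α f 0 = 0 := by rw [hf0, henv0]; ring
  have part3 : ∀ x, f 0 - env α f 0 ≤ f x - env α f x := fun x => part2 ▸ part1 x
  have part4 : fsubdiff (fun x => f x - env α f x) 0 = subdiff f 0 := by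
    ext d
    simp only [fsubdiff, subdiff, Set.mem_setOf_eq, sub_zero]
    constructor
    · intro hd y
      rw [hf0, zero_add]
      by_cases hy : y = 0
      · simp [hy, hf0]
      have hy' : 0 < ‖y‖ := norm_pos_iff.2 hy
      have hstep : ∀ ε > (0:ℝ), ⟪d, y⟫ ≤ f y + ε * ‖y‖ := by
        intro ε hε
        obtain ⟨δ, hδ, H⟩ := hd ε hε
        set t := min 1 (δ / (2 * ‖y‖)) with ht
        have ht0 : 0 < t := lt_min one_pos (by positivity)
        have ht1 : t ≤ 1 := min_le_left _ _
        have hnorm : ‖t • y‖ < δ := by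
          rw [norm_smul, Real.norm_eq_abs, abs_of_pos ht0]
          calc t * ‖y‖ ≤ (δ / (2 * ‖y‖)) * ‖y‖ :=
                mul_le_mul_of_nonneg_right (min_le_right _ _) hy'.le
            _ = δ / 2 := by field_simp
            _ < δ := by linarith
        have hH := H (t • y) hnorm
        have hfty : f (t • y) ≤ t * f y := by
          have hc := hconv.2 (Set.mem_univ (0 : E n)) (Set.mem_univ y)
            (by linarith : (0:ℝ) ≤ 1 - t) ht0.le (by ring)
          simpa [hf0] using hc
        have henvn := henv_nonneg (t • y)
        have hin : ⟪d, t • y⟫ = t * ⟪d, y⟫ := real_inner_smul_right d y t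
        have hns : ‖t • y‖ = t * ‖y‖ := by
          rw [norm_smul, Real.norm_eq_abs, abs_of_pos ht0]
        rw [part2, zero_add, hin, hns] at hH
        have hmul : t * ⟪d, y⟫ ≤ t * (f y + ε * ‖y‖) := by nlinarith
        exact le_of_mul_le_mul_left (by linarith [hmul]) ht0
      by_contra hcon
      push_neg at hcon
      have hεpos : 0 < (⟪d, y⟫ - f y) / (2 * ‖y‖) := by
        apply div_pos (by linarith) (by positivity)
      have h2 := hstep _ hεpos
      have : (⟪d, y⟫ - f y) / (2 * ‖y‖) * ‖y‖ = (⟪d, y⟫ - f y) / 2 := by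
        field_simp
      rw [this] at h2
      linarith
    · intro hd ε hε
      refine ⟨2 * α * ε, by positivity, ?_⟩
      intro u hu
      have h1 : ⟪d, u⟫ ≤ f u := by
        have := hd u
        rw [hf0, zero_add] at this
        exact this
      have h2 : env α f u ≤ ‖u‖ ^ 2 / (2 * α) := hkey u
      have h3 : ‖u‖ ^ 2 / (2 * α) ≤ ε * ‖u‖ := by
        rw [div_le_iff₀ (by positivity)]
        nlinarith [norm_nonneg u]
      rw [part2, zero_add]
      linarith
  refine ⟨part1, part2, part3, part4, d0, ?_, hd0ne⟩
  rw [part4]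
  exact hd0
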